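/- Let f : ℝ → ℝ be continuous and let j be a positive even integer. Then (2/π)∫₀^π f(r sin(jx)) sin(jx) dx = (2/π)∫₀^π f_o(r sin x) sin x dx for every real r, where f_o(x) = (f(x) - f(-x))/2 is the odd part of f. -/

import Mathlib

open Real

theorem stmt2 (f : ℝ → ℝ) (hf : Continuous f) (j : ℕ) (hj : 0 < j) (hje : Even j)
    (r : ℝ) :
    (2 / π) * ∫ x in (0:ℝ)..π, f (r * Real.sin (j * x)) * Real.sin (j * x)
      = (2 / π) * ∫ x in (0:ℝ)..π,
          ((f (r * Real.sin x) - f (-(r * Real.sin x))) / 2) * Real.sin x := by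
  obtain ⟨k, hk⟩ := hje
  set g : ℝ → ℝ := fun x => f (r * Real.sin x) * Real.sin x with hg
  have hgc : Continuous g := by continuity
  have hper : Function.Periodic g (2 * π) := by
    intro x; simp [hg, Real.sin_add_two_pi]
  have hint : ∀ t₁ t₂ : ℝ, IntervalIntegrable g MeasureTheory.volume t₁ t₂ :=
    fun t₁ t₂ => hgc.intervalIntegrable t₁ t₂
  have hjne : (j : ℝ) ≠ 0 := Nat.cast_ne_zero.mpr hj.ne'
  have h1 : (∫ x in (0:ℝ)..π, g (j * x)) = (j : ℝ)⁻¹ • ∫ x in (0:ℝ)..(j * π), g x := by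
    rw [intervalIntegral.integral_comp_mul_left g hjne, mul_zero]
  have hk1 : 0 < k := by omega
  have h2 : (∫ x in (0:ℝ)..(j * π), g x) = (k : ℤ) • ∫ x in (0:ℝ)..(2 * π), g x := by
    have := hper.intervalIntegral_add_zsmul_eq (k : ℤ) 0 hint
    simp only [zero_add] at this
    rw [← this]
    congr 1
    push_cast [hk, zsmul_eq_mul]; ring
  have h3 : (∫ x in (0:ℝ)..(2 * π), g x) = ∫ x in (-π)..π, g x := by
    have := hper.intervalIntegral_add_eq (-π) 0
    simp only [zero_add, neg_add_eq_sub] at this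
    rw [← this]; congr 1; ring
  have h4 : (∫ x in (-π)..(0:ℝ), g x) = ∫ x in (0:ℝ)..π, g (-x) := by
    rw [intervalIntegral.integral_comp_neg (a := (0:ℝ)) (b := π) g]; norm_num
  have h5 : (∫ x in (-π)..π, g x) = (∫ x in (0:ℝ)..π, g (-x)) + ∫ x in (0:ℝ)..π, g x := by
    rw [← intervalIntegral.integral_add_adjacent_intervals (hint (-π) 0) (hint 0 π), h4]
  have h6 : (∫ x in (0:ℝ)..π, g (-x)) + (∫ x in (0:ℝ)..π, g x)
      = 2 * ∫ x in (0:ℝ)..π, ((f (r * Real.sin x) - f (-(r * Real.sin x))) / 2) * Real.sin x := by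
    have hneg : IntervalIntegrable (fun x => g (-x)) MeasureTheory.volume 0 π :=
      (hgc.comp continuous_neg).intervalIntegrable 0 π
    rw [← intervalIntegral.integral_add hneg (hint 0 π), ← intervalIntegral.integral_const_mul]
    congr 1; ext x
    simp only [hg, Real.sin_neg, mul_neg]
    ring
  have hjk : (j : ℝ) = 2 * k := by push_cast [hk, zsmul_eq_mul]; ring
  rw [show (∫ x in (0:ℝ)..π, f (r * Real.sin (j * x)) * Real.sin (j * x))
      = ∫ x in (0:ℝ)..π, g (j * x) from rfl, h1, h2, h3, h5, h6]
  rw [hjk]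
  have hkne : (k : ℝ) ≠ 0 := by exact_mod_cast hk1.ne'
  rw [zsmul_eq_mul, Int.cast_natCast, smul_eq_mul]
  field_simp
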